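/- Let T > 0, k ∈ ℝ, let g : ℝ → ℝ be continuous, and let B : ℝ → (ℝⁿ →L[ℝ] ℝⁿ) be differentiable and satisfy the matrix Riccati equation B'(t) + B(t)² + 2g(t)·B(t) + k·id = 0 for all t ∈ [0, T]. If B(0) y₀ = λ₀·y₀ for some nonzero vector y₀ ∈ ℝⁿ and some real number λ₀, then there exists a differentiable function λ : [0, T] → ℝ with λ(0) = λ₀ such that B(t) y₀ = λ(t)·y₀ for all t ∈ [0, T] and λ'(t) + λ(t)² + 2g(t)·λ(t) + k = 0 on [0, T]; in particular, every eigenvector of B(0) remains an eigenvector of B(t) for all t. -/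

import Mathlib

open Real
open scoped RealInnerProductSpace

set_option maxHeartbeats 1000000
set_option synthInstance.maxHeartbeats 400000

/-- If `B` satisfies the weighted matrix Riccati equation
`B' + B² + 2g·B + k·id = 0` on `[0, T]` and `B(0) y₀ = lam₀ y₀` with `y₀ ≠ 0`, then there is a
differentiable `λ : [0,T] → ℝ` with `λ(0) = lam₀`, `B(t) y₀ = λ(t) y₀` on `[0,T]`, and
`λ' + λ² + 2g·λ + k = 0` on `[0,T]`; in particular eigenvectors of `B(0)` remain
eigenvectors of `B(t)`. -/
theorem stmt_13 {n : ℕ} (T k : ℝ) (hT : 0 < T)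
    (g : ℝ → ℝ) (hg : Continuous g)
    (B B' : ℝ → EuclideanSpace ℝ (Fin n) →L[ℝ] EuclideanSpace ℝ (Fin n))
    (hB : ∀ t, HasDerivAt B (B' t) t)
    (hRic : ∀ t ∈ Set.Icc (0 : ℝ) T,
      B' t + B t ∘L B t + (2 * g t) • B t
        + k • ContinuousLinearMap.id ℝ (EuclideanSpace ℝ (Fin n)) = 0)
    (y₀ : EuclideanSpace ℝ (Fin n)) (hy₀ : y₀ ≠ 0) (lam₀ : ℝ)
    (heig : B 0 y₀ = lam₀ • y₀) :
    ∃ lam lam' : ℝ → ℝ, lam 0 = lam₀ ∧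
      (∀ t ∈ Set.Icc (0 : ℝ) T, HasDerivAt lam (lam' t) t) ∧
      (∀ t ∈ Set.Icc (0 : ℝ) T, B t y₀ = lam t • y₀) ∧
      (∀ t ∈ Set.Icc (0 : ℝ) T, lam' t + lam t ^ 2 + 2 * g t * lam t + k = 0) := by
  set c : ℝ := ⟪y₀, y₀⟫ with hc_def
  have hc : 0 < c := by
    rw [hc_def, real_inner_self_eq_norm_sq]
    exact pow_pos (norm_pos_iff.2 hy₀) 2
  set w : ℝ → EuclideanSpace ℝ (Fin n) := fun t => B t y₀ with hw_def
  have hw : ∀ t, HasDerivAt w (B' t y₀) t := by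
    intro t
    simpa using (hB t).clm_apply (hasDerivAt_const t y₀)
  set lam : ℝ → ℝ := fun t => ⟪w t, y₀⟫ / c with hlam_def
  set lam' : ℝ → ℝ := fun t => ⟪B' t y₀, y₀⟫ / c with hlam'_def
  have hlam : ∀ t, HasDerivAt lam (lam' t) t := by
    intro t
    have := (HasDerivAt.inner ℝ (hw t) (hasDerivAt_const t y₀)).div_const c
    simpa using this
  set u : ℝ → EuclideanSpace ℝ (Fin n) := fun t => w t - lam t • y₀ with hu_def
  set u' : ℝ → EuclideanSpace ℝ (Fin n) := fun t => B' t y₀ - lam' t • y₀ with hu'_def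
  have hu : ∀ t, HasDerivAt u (u' t) t := fun t => (hw t).sub ((hlam t).smul_const y₀)
  -- orthogonality
  have horth : ∀ t, ⟪u t, y₀⟫ = 0 := by
    intro t
    simp only [hu_def, inner_sub_left, real_inner_smul_left, hlam_def, ← hc_def]
    rw [div_mul_cancel₀ _ (ne_of_gt hc), sub_self]
  -- Riccati applied to y₀
  have hB'y : ∀ t ∈ Set.Icc (0 : ℝ) T,
      B' t y₀ = -(B t (w t)) - (2 * g t) • w t - k • y₀ := by
    intro t ht
    have h := congrArg (fun A : EuclideanSpace ℝ (Fin n) →L[ℝ] EuclideanSpace ℝ (Fin n) => A y₀) (hRic t ht)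
    simp only [ContinuousLinearMap.add_apply, ContinuousLinearMap.comp_apply,
      ContinuousLinearMap.smul_apply, ContinuousLinearMap.id_apply,
      ContinuousLinearMap.zero_apply] at h
    have h2 : B' t y₀ + (B t (w t) + ((2 * g t) • w t + k • y₀)) = 0 := by
      rw [← h]; abel
    rw [add_eq_zero_iff_eq_neg] at h2
    rw [h2]; abel
  -- key formula for u'
  have hkey : ∀ t ∈ Set.Icc (0 : ℝ) T,
      u' t = -(B t (u t)) - (lam t + 2 * g t) • u t + (⟪B t (u t), y₀⟫ / c) • y₀ := by
    intro t ht
    have hwu : w t = u t + lam t • y₀ := by simp [hu_def]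
    have hBy' : B' t y₀ = -(B t (u t)) - (lam t) • u t - (2 * g t) • u t
        - (lam t ^ 2 + 2 * g t * lam t + k) • y₀ := by
      rw [hB'y t ht, hwu]
      rw [map_add, map_smul]
      have hby : B t y₀ = w t := rfl
      rw [hby, hwu]
      module
    have hlam'eq : lam' t = -(⟪B t (u t), y₀⟫ / c) - (lam t ^ 2 + 2 * g t * lam t + k) := by
      have hi : ⟪B' t y₀, y₀⟫ = -⟪B t (u t), y₀⟫ - (lam t ^ 2 + 2 * g t * lam t + k) * c := by
        rw [hBy']
        simp only [inner_sub_left, inner_neg_left, real_inner_smul_left, horth t, ← hc_def]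
        ring
      simp only [hlam'_def, hi]
      field_simp
    simp only [hu'_def, hBy', hlam'eq]
    module
  -- norm bound for u'
  have hBcont : Continuous B := continuous_iff_continuousAt.2 fun t => (hB t).continuousAt
  have hlamcont : Continuous lam := continuous_iff_continuousAt.2 fun t => (hlam t).continuousAt
  set h : ℝ → ℝ := fun t => 2 * ‖B t‖ + |lam t| + 2 * |g t| with hh_def
  have hhcont : Continuous h := by fun_prop
  obtain ⟨t₀, ht₀, hmax⟩ := isCompact_Icc.exists_isMaxOn (Set.nonempty_Icc.2 hT.le)
    hhcont.continuousOn
  set K : ℝ := h t₀ with hK_def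
  have hbound : ∀ t ∈ Set.Ico (0 : ℝ) T, ‖u' t‖ ≤ K * ‖u t‖ + 0 := by
    intro t ht
    have ht' : t ∈ Set.Icc (0 : ℝ) T := Set.Ico_subset_Icc_self ht
    rw [hkey t ht', add_zero]
    have hcy : c = ‖y₀‖ ^ 2 := by rw [hc_def, real_inner_self_eq_norm_sq]
    have h1 : ‖-(B t (u t)) - (lam t + 2 * g t) • u t + (⟪B t (u t), y₀⟫ / c) • y₀‖ ≤
        ‖B t (u t)‖ + ‖(lam t + 2 * g t) • u t‖ + ‖(⟪B t (u t), y₀⟫ / c) • y₀‖ := by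
      calc _ ≤ ‖-(B t (u t)) - (lam t + 2 * g t) • u t‖ + ‖(⟪B t (u t), y₀⟫ / c) • y₀‖ :=
            norm_add_le _ _
        _ ≤ _ := by
            gcongr
            exact (norm_sub_le _ _).trans (by rw [norm_neg])
    have hBu : ‖B t (u t)‖ ≤ ‖B t‖ * ‖u t‖ := (B t).le_opNorm _
    have h2 : ‖(lam t + 2 * g t) • u t‖ ≤ (|lam t| + 2 * |g t|) * ‖u t‖ := by
      rw [norm_smul]
      gcongr
      calc ‖lam t + 2 * g t‖ = |lam t + 2 * g t| := rfl
        _ ≤ |lam t| + |2 * g t| := abs_add_le _ _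
        _ = |lam t| + 2 * |g t| := by rw [abs_mul]; norm_num
    have h3 : ‖(⟪B t (u t), y₀⟫ / c) • y₀‖ ≤ ‖B t‖ * ‖u t‖ := by
      rw [norm_smul]
      have : |⟪B t (u t), y₀⟫| ≤ ‖B t‖ * ‖u t‖ * ‖y₀‖ := by
        calc |⟪B t (u t), y₀⟫| ≤ ‖B t (u t)‖ * ‖y₀‖ := abs_real_inner_le_norm _ _
          _ ≤ ‖B t‖ * ‖u t‖ * ‖y₀‖ := by gcongr
      calc ‖⟪B t (u t), y₀⟫ / c‖ * ‖y₀‖ = |⟪B t (u t), y₀⟫| / c * ‖y₀‖ := by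
            rw [Real.norm_eq_abs, abs_div, abs_of_pos hc]
        _ ≤ (‖B t‖ * ‖u t‖ * ‖y₀‖) / c * ‖y₀‖ := by gcongr
        _ = ‖B t‖ * ‖u t‖ * (‖y₀‖ * ‖y₀‖ / c) := by ring
        _ = ‖B t‖ * ‖u t‖ := by
            rw [hcy]
            have hone : ‖y₀‖ * ‖y₀‖ / ‖y₀‖ ^ 2 = 1 := by
              rw [← pow_two]; exact div_self (pow_ne_zero 2 (norm_ne_zero_iff.2 hy₀))
            rw [hone, mul_one]
    calc ‖-(B t (u t)) - (lam t + 2 * g t) • u t + (⟪B t (u t), y₀⟫ / c) • y₀‖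
        ≤ ‖B t (u t)‖ + ‖(lam t + 2 * g t) • u t‖ + ‖(⟪B t (u t), y₀⟫ / c) • y₀‖ := h1
      _ ≤ ‖B t‖ * ‖u t‖ + (|lam t| + 2 * |g t|) * ‖u t‖ + ‖B t‖ * ‖u t‖ := by
          gcongr
      _ = h t * ‖u t‖ := by rw [hh_def]; ring
      _ ≤ K * ‖u t‖ := mul_le_mul_of_nonneg_right (hmax ht') (norm_nonneg _)
  have hu0 : u 0 = 0 := by
    have hl0 : lam 0 = lam₀ := by
      simp only [hlam_def, hw_def, heig, real_inner_smul_left, ← hc_def]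
      field_simp
    simp [hu_def, hw_def, heig, hl0]
  have huzero : ∀ t ∈ Set.Icc (0 : ℝ) T, u t = 0 := by
    intro t ht
    have := norm_le_gronwallBound_of_norm_deriv_right_le
      (f := u) (f' := u') (δ := 0) (K := K) (ε := 0) (a := 0) (b := T)
      (fun s _ => (hu s).continuousAt.continuousWithinAt)
      (fun s _ => (hu s).hasDerivWithinAt) (by simp [hu0]) hbound t ht
    rw [sub_zero, gronwallBound_ε0_δ0] at this
    exact norm_le_zero_iff.1 this
  refine ⟨lam, lam', ?_, fun t _ => hlam t, ?_, ?_⟩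
  · simp only [hlam_def, hw_def, heig, real_inner_smul_left, ← hc_def]
    field_simp
  · intro t ht
    have h0 : w t - lam t • y₀ = 0 := huzero t ht
    exact sub_eq_zero.1 h0
  · intro t ht
    have h0 : w t - lam t • y₀ = 0 := huzero t ht
    have hBy : B t y₀ = lam t • y₀ := sub_eq_zero.1 h0
    have hBy' : B' t y₀ = -((lam t ^ 2 + 2 * g t * lam t + k) • y₀) := by
      rw [hB'y t ht]
      have : B t (w t) = (lam t ^ 2) • y₀ := by
        show B t (B t y₀) = _
        rw [hBy, map_smul, hBy, smul_smul, sq]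
      rw [this]
      show _ - (2 * g t) • B t y₀ - _ = _
      rw [hBy]
      module
    have : lam' t = -(lam t ^ 2 + 2 * g t * lam t + k) := by
      simp only [hlam'_def, hBy', inner_neg_left, real_inner_smul_left, ← hc_def]
      field_simp
    rw [this]; ring
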